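/- arXiv:1910.07888 — 2 statements merged into one kernel-verified Lean document; each statement's English description precedes it below -/
import Mathlib

section
/- Let ν ≥ 0 and x : I → ℝ^N solve the B_N ODE x_i' = Σ_{j≠i}(1/(x_i−x_j) + 1/(x_i+x_j)) + ν/x_i in the open chamber {x_1 > ... > x_N > 0}. Then for 2 ≤ k ≤ N, d/dt ẽ_k(x(t)) = 2(N−k+1)(N−k+ν) · ẽ_{k-1}(x(t)), where ẽ_k(x) := e_k(x_1²,...,x_N²). -/
open Finset

/-- Elementary symmetric polynomial of degree `k` in the variables `x i`, `i ∈ s`. -/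
noncomputable def esymm {N : ℕ} (s : Finset (Fin N)) (k : ℕ) (x : Fin N → ℝ) : ℝ :=
  ∑ A ∈ s.powersetCard k, ∏ i ∈ A, x i

lemma powersetCard_erase' {N : ℕ} (s : Finset (Fin N)) (i : Fin N) (k : ℕ) :
    (s.erase i).powersetCard k = (s.powersetCard k).filter (fun A => i ∉ A) := by
  ext A
  simp only [mem_powersetCard, mem_filter, subset_erase]
  tauto

lemma filter_mem_powersetCard' {N : ℕ} {s : Finset (Fin N)} {i : Fin N} (hi : i ∈ s) (k : ℕ) :
    (s.powersetCard (k+1)).filter (fun A => i ∈ A)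
      = ((s.erase i).powersetCard k).image (insert i) := by
  ext B
  simp only [mem_filter, mem_powersetCard, mem_image]
  constructor
  · rintro ⟨⟨hBs, hcard⟩, hiB⟩
    refine ⟨B.erase i, ⟨fun a ha => ?_, ?_⟩, insert_erase hiB⟩
    · rcases mem_erase.mp ha with ⟨hai, haB⟩
      exact mem_erase.mpr ⟨hai, hBs haB⟩
    · rw [card_erase_of_mem hiB, hcard]
      omega
  · rintro ⟨A, ⟨hA, hcard⟩, rfl⟩
    have hiA : i ∉ A := fun h => (mem_erase.mp (hA h)).1 rfl
    refine ⟨⟨?_, ?_⟩, mem_insert_self i A⟩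
    · intro a ha
      rcases mem_insert.mp ha with rfl | h
      · exact hi
      · exact (mem_erase.mp (hA h)).2
    · rw [card_insert_of_notMem hiA, hcard]

lemma insert_injOn' {N : ℕ} (s : Finset (Fin N)) (i : Fin N) (k : ℕ) :
    ∀ A ∈ (s.erase i).powersetCard k, ∀ B ∈ (s.erase i).powersetCard k,
      insert i A = insert i B → A = B := by
  intro A hA B hB h
  have hiA : i ∉ A := fun hh => (mem_erase.mp ((mem_powersetCard.mp hA).1 hh)).1 rfl
  have hiB : i ∉ B := fun hh => (mem_erase.mp ((mem_powersetCard.mp hB).1 hh)).1 rfl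
  rw [← erase_insert hiA, ← erase_insert hiB, h]

lemma esymm_split {N : ℕ} {s : Finset (Fin N)} {i : Fin N} (hi : i ∈ s) (k : ℕ) (y : Fin N → ℝ) :
    esymm s (k+1) y = esymm (s.erase i) (k+1) y + y i * esymm (s.erase i) k y := by
  unfold esymm
  rw [← Finset.sum_filter_add_sum_filter_not (s.powersetCard (k+1)) (fun A => i ∈ A), add_comm]
  congr 1
  · rw [powersetCard_erase']
  · rw [filter_mem_powersetCard' hi, sum_image (insert_injOn' s i k), mul_sum]
    refine sum_congr rfl fun A hA => ?_
    have hiA : i ∉ A := fun hh => (mem_erase.mp ((mem_powersetCard.mp hA).1 hh)).1 rfl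
    rw [prod_insert hiA]

lemma sum_esymm_erase {N : ℕ} (s : Finset (Fin N)) (k : ℕ) (y : Fin N → ℝ) :
    ∑ i ∈ s, esymm (s.erase i) k y = ((s.card : ℝ) - k) * esymm s k y := by
  have h1 : ∀ i : Fin N, esymm (s.erase i) k y
      = ∑ A ∈ s.powersetCard k, if i ∉ A then ∏ j ∈ A, y j else 0 := by
    intro i
    rw [esymm, powersetCard_erase', sum_filter]
  calc ∑ i ∈ s, esymm (s.erase i) k y
      = ∑ A ∈ s.powersetCard k, ∑ i ∈ s, if i ∉ A then ∏ j ∈ A, y j else 0 := by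
        simp_rw [h1]; rw [sum_comm]
    _ = ∑ A ∈ s.powersetCard k, ((s.card : ℝ) - k) * ∏ j ∈ A, y j := by
        refine sum_congr rfl fun A hA => ?_
        rcases mem_powersetCard.mp hA with ⟨hAs, hc⟩
        rw [sum_ite, sum_const, sum_const_zero, add_zero, ← sdiff_eq_filter, nsmul_eq_mul,
          card_sdiff_of_subset hAs, Nat.cast_sub (hc ▸ card_le_card hAs), hc]
    _ = ((s.card : ℝ) - k) * esymm s k y := by rw [esymm, mul_sum]

lemma sum_prod_erase' {N : ℕ} (s : Finset (Fin N)) (k : ℕ) (y g : Fin N → ℝ) :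
    ∑ A ∈ s.powersetCard (k+1), ∑ i ∈ A, (∏ j ∈ A.erase i, y j) * g i
      = ∑ i ∈ s, esymm (s.erase i) k y * g i := by
  have h0 : ∀ A ∈ s.powersetCard (k+1), ∑ i ∈ A, (∏ j ∈ A.erase i, y j) * g i
      = ∑ i ∈ s, if i ∈ A then (∏ j ∈ A.erase i, y j) * g i else 0 := by
    intro A hA
    rw [Finset.sum_ite_mem, inter_eq_right.mpr (mem_powersetCard.mp hA).1]
  rw [sum_congr rfl h0, sum_comm]
  refine sum_congr rfl fun i hi => ?_
  rw [← sum_filter, filter_mem_powersetCard' hi, sum_image (insert_injOn' s i k), esymm, sum_mul]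
  refine sum_congr rfl fun A hA => ?_
  have hiA : i ∉ A := fun hh => (mem_erase.mp ((mem_powersetCard.mp hA).1 hh)).1 rfl
  rw [erase_insert hiA]

theorem stmt10 (N : ℕ) (ν : ℝ) (hν : 0 ≤ ν) (I : Set ℝ) (x : ℝ → Fin N → ℝ)
    (hcham : ∀ t ∈ I, (∀ i j : Fin N, i < j → x t j < x t i) ∧ ∀ i : Fin N, 0 < x t i)
    (hode : ∀ t ∈ I, ∀ i : Fin N, HasDerivAt (fun s => x s i)
      (∑ j ∈ Finset.univ.erase i,
          (1 / (x t i - x t j) + 1 / (x t i + x t j)) + ν / x t i) t) :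
    ∀ t ∈ I, ∀ k : ℕ, 2 ≤ k → k ≤ N →
      HasDerivAt (fun s => esymm Finset.univ k (fun i => (x s i) ^ 2))
        (2 * ((N : ℝ) - k + 1) * ((N : ℝ) - k + ν)
          * esymm Finset.univ (k - 1) (fun i => (x t i) ^ 2)) t := by
  intro t ht k hk2 hkN
  obtain ⟨m, rfl⟩ : ∃ m, k = m + 2 := ⟨k - 2, by omega⟩
  have hN : 2 ≤ N := le_trans hk2 hkN
  have hpos : ∀ i, 0 < x t i := (hcham t ht).2
  have hdec : ∀ i j : Fin N, i < j → x t j < x t i := (hcham t ht).1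
  set y : Fin N → ℝ := fun i => x t i ^ 2 with hy_def
  have hyne : ∀ i j : Fin N, i ≠ j → y i ≠ y j := by
    intro i j hij
    rcases lt_trichotomy i j with h | h | h
    · exact ne_of_gt (pow_lt_pow_left₀ (hdec i j h) (hpos j).le two_ne_zero)
    · exact absurd h hij
    · exact ne_of_lt (pow_lt_pow_left₀ (hdec j i h) (hpos i).le two_ne_zero)
  set rhs : Fin N → ℝ := fun i =>
    ∑ j ∈ Finset.univ.erase i, (1 / (x t i - x t j) + 1 / (x t i + x t j)) + ν / x t i
      with hrhs_def
  set d : Fin N → ℝ := fun i => 2 * x t i * rhs i with hd_def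
  -- the derivative exists with value D0
  have hD : HasDerivAt (fun s => esymm Finset.univ (m+2) (fun i => (x s i) ^ 2))
      (∑ A ∈ (Finset.univ : Finset (Fin N)).powersetCard (m+2),
        ∑ i ∈ A, (∏ j ∈ A.erase i, y j) * d i) t := by
    simp only [esymm]
    apply HasDerivAt.fun_sum
    intro A hA
    have := HasDerivAt.fun_finsetProd (u := A) (f := fun i s => (x s i) ^ 2)
      (f' := d) (x := t) (fun i _ => by
        have h := (hode t ht i).fun_pow 2
        simpa [hd_def, hrhs_def, pow_one, mul_comm, mul_assoc, mul_left_comm] using h)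
    simp only [smul_eq_mul] at this
    convert this using 1
  have hxne : ∀ i j : Fin N, i ≠ j → x t i ≠ x t j := by
    intro i j hij
    rcases lt_trichotomy i j with h | h | h
    · exact ne_of_gt (hdec i j h)
    · exact absurd h hij
    · exact ne_of_lt (hdec j i h)
  set e : Fin N → ℝ := fun i => esymm ((univ : Finset (Fin N)).erase i) (m+1) y with he_def
  convert hD using 1
  rw [show (m+2) = (m+1)+1 from rfl, sum_prod_erase' univ (m+1) y d]
  have hsum_e : ∑ i : Fin N, e i = ((N:ℝ) - ((m:ℝ)+1)) * esymm univ (m+1) y := by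
    have h := sum_esymm_erase (univ : Finset (Fin N)) (m+1) y
    rw [card_univ, Fintype.card_fin] at h
    simp only [he_def]
    rw [h]
    push_cast
    ring
  have hd2 : ∀ i : Fin N, d i = (∑ j ∈ univ.erase i, 4 * y i / (y i - y j)) + 2 * ν := by
    intro i
    have hxi : x t i ≠ 0 := (hpos i).ne'
    simp only [hd_def, hrhs_def]
    rw [mul_add, mul_sum]
    congr 1
    · refine sum_congr rfl fun j hj => ?_
      have hji : j ≠ i := (mem_erase.mp hj).1
      have h1 : x t i - x t j ≠ 0 := sub_ne_zero.mpr (hxne i j (Ne.symm hji))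
      have h2 : x t i + x t j ≠ 0 := by
        have := hpos i; have := hpos j; positivity
      have h3 : y i - y j ≠ 0 := sub_ne_zero.mpr (hyne i j (Ne.symm hji))
      simp only [hy_def] at h3 ⊢
      field_simp
      ring
    · field_simp
  have hsplit : ∑ i : Fin N, e i * d i
      = (∑ i : Fin N, ∑ j ∈ univ.erase i, e i * (4 * y i / (y i - y j)))
        + 2 * ν * ∑ i : Fin N, e i := by
    simp_rw [hd2, mul_add, mul_sum]
    rw [sum_add_distrib]
    congr 1
    exact sum_congr rfl fun i _ => by ring
  have hpair : ∀ i j : Fin N, j ≠ i →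
      e i * (4 * y i / (y i - y j)) + e j * (4 * y j / (y j - y i))
        = 4 * esymm (((univ : Finset (Fin N)).erase i).erase j) (m+1) y := by
    intro i j hji
    have hj' : j ∈ (univ : Finset (Fin N)).erase i := mem_erase.mpr ⟨hji, mem_univ j⟩
    have hi' : i ∈ (univ : Finset (Fin N)).erase j :=
      mem_erase.mpr ⟨fun h => hji h.symm, mem_univ i⟩
    have hei : e i = esymm (((univ : Finset (Fin N)).erase i).erase j) (m+1) y
        + y j * esymm (((univ : Finset (Fin N)).erase i).erase j) m y := by
      simp only [he_def]
      exact esymm_split hj' m y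
    have hej : e j = esymm (((univ : Finset (Fin N)).erase i).erase j) (m+1) y
        + y i * esymm (((univ : Finset (Fin N)).erase i).erase j) m y := by
      simp only [he_def]
      have h := esymm_split hi' m y
      rwa [show ((univ : Finset (Fin N)).erase j).erase i
        = ((univ : Finset (Fin N)).erase i).erase j from erase_right_comm] at h
    have h3 : y i - y j ≠ 0 := sub_ne_zero.mpr (hyne i j (fun h => hji h.symm))
    have h4 : y j - y i ≠ 0 := sub_ne_zero.mpr (hyne j i hji)
    rw [hei, hej]
    field_simp
    ring
  have hswap : (∑ i : Fin N, ∑ j ∈ univ.erase i, e i * (4 * y i / (y i - y j)))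
      = ∑ i : Fin N, ∑ j ∈ univ.erase i, e j * (4 * y j / (y j - y i)) := by
    refine Finset.sum_comm' (s := univ) (t := fun i => univ.erase i) (t' := univ)
      (s' := fun j => univ.erase j) ?_
    intro a b
    simp only [mem_univ, mem_erase, and_true, true_and]
    exact ne_comm
  have hdouble : (∑ i : Fin N, ∑ j ∈ univ.erase i, e i * (4 * y i / (y i - y j))) * 2
      = ∑ i : Fin N, ∑ j ∈ univ.erase i,
          4 * esymm (((univ : Finset (Fin N)).erase i).erase j) (m+1) y := by
    rw [mul_two]
    nth_rewrite 2 [hswap]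
    rw [← sum_add_distrib]
    refine sum_congr rfl fun i _ => ?_
    rw [← sum_add_distrib]
    exact sum_congr rfl fun j hj => hpair i j (mem_erase.mp hj).1
  have hinner : ∀ i : Fin N,
      ∑ j ∈ univ.erase i, esymm (((univ : Finset (Fin N)).erase i).erase j) (m+1) y
        = (((N:ℝ) - 1) - ((m:ℝ)+1)) * e i := by
    intro i
    have h := sum_esymm_erase ((univ : Finset (Fin N)).erase i) (m+1) y
    rw [card_erase_of_mem (mem_univ i), card_univ, Fintype.card_fin] at h
    simp only [he_def]
    rw [h, Nat.cast_sub (by omega : 1 ≤ N)]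
    push_cast
    try ring
  have hE2 : (∑ i : Fin N, ∑ j ∈ univ.erase i,
        4 * esymm (((univ : Finset (Fin N)).erase i).erase j) (m+1) y)
      = 4 * (((N:ℝ) - 1) - ((m:ℝ)+1)) * (((N:ℝ)) - ((m:ℝ)+1)) * esymm univ (m+1) y := by
    have : ∀ i : Fin N, (∑ j ∈ univ.erase i,
        4 * esymm (((univ : Finset (Fin N)).erase i).erase j) (m+1) y)
        = 4 * ((((N:ℝ) - 1) - ((m:ℝ)+1)) * e i) := by
      intro i
      rw [← mul_sum, hinner i]
    rw [sum_congr rfl fun i _ => this i, ← mul_sum, ← mul_sum, hsum_e]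
    ring
  have hT1 : (∑ i : Fin N, ∑ j ∈ univ.erase i, e i * (4 * y i / (y i - y j)))
      = 2 * (((N:ℝ) - 1) - ((m:ℝ)+1)) * (((N:ℝ)) - ((m:ℝ)+1)) * esymm univ (m+1) y := by
    rw [hE2] at hdouble
    linarith
  have : ∑ i : Fin N, esymm (univ.erase i) (m+1) y * d i = ∑ i : Fin N, e i * d i := by
    simp only [he_def]
  rw [this, hsplit, hT1, hsum_e, show (m+1+1-1 : ℕ) = m+1 from rfl]
  push_cast
  ring
end

section
/- Let ν > 0 and x solve the B_N ODE x_i' = Σ_{j≠i}(1/(x_i−x_j)+1/(x_i+x_j)) + ν/x_i with start in the open chamber. Then for 0 ≤ k ≤ N, t ↦ ẽ_k(x(t)) = e_k(x_1(t)²,...,x_N(t)²) is a polynomial in t of degree k with leading coefficient 2^k (N+ν−1)(N+ν−2)···(N+ν−k) · binom(N,k). -/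
open Finset

lemma sum_erase_reindex {N k : ℕ} (F : Finset (Fin N) → Fin N → ℝ) :
    ∑ A ∈ powersetCard (k+1) (univ : Finset (Fin N)), ∑ i ∈ A, F (A.erase i) i
    = ∑ B ∈ powersetCard k (univ : Finset (Fin N)), ∑ i ∈ univ \ B, F B i := by
  rw [Finset.sum_sigma', Finset.sum_sigma']
  refine Finset.sum_nbij' (fun x => ⟨x.1.erase x.2, x.2⟩)
    (fun x => ⟨insert x.2 x.1, x.2⟩) ?_ ?_ ?_ ?_ ?_
  · rintro ⟨A, i⟩ hx
    simp only [Finset.mem_sigma, Finset.mem_powersetCard_univ] at hx ⊢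
    obtain ⟨hA, hi⟩ := hx
    refine ⟨?_, by simp⟩
    rw [Finset.card_erase_of_mem hi, hA]; rfl
  · rintro ⟨B, i⟩ hx
    simp only [Finset.mem_sigma, Finset.mem_powersetCard_univ, Finset.mem_sdiff] at hx ⊢
    obtain ⟨hB, hi⟩ := hx
    refine ⟨?_, by simp⟩
    rw [Finset.card_insert_of_notMem hi.2, hB]
  · rintro ⟨A, i⟩ hx
    simp only [Finset.mem_sigma] at hx
    simp [Finset.insert_erase hx.2]
  · rintro ⟨B, i⟩ hx
    simp only [Finset.mem_sigma, Finset.mem_sdiff] at hx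
    simp [Finset.erase_insert hx.2.2]
  · rintro ⟨A, i⟩ hx; rfl

lemma sum_pair_off {N : ℕ} (C : Finset (Fin N)) (f : Fin N → Fin N → ℝ) (c0 : ℝ)
    (h : ∀ i ∈ C, ∀ j ∈ C, i ≠ j → f i j + f j i = c0) :
    2 * (∑ i ∈ C, ∑ j ∈ C.erase i, f i j) = ((C.card * (C.card - 1) : ℕ) : ℝ) * c0 := by
  have hsymm : ∑ i ∈ C, ∑ j ∈ C.erase i, f i j = ∑ i ∈ C, ∑ j ∈ C.erase i, f j i := by
    rw [Finset.sum_comm' (t' := C) (s' := fun y => C.erase y)]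
    intro x y
    simp only [Finset.mem_erase]
    tauto
  have : 2 * (∑ i ∈ C, ∑ j ∈ C.erase i, f i j)
      = ∑ i ∈ C, ∑ j ∈ C.erase i, (f i j + f j i) := by
    rw [two_mul]
    nth_rewrite 2 [hsymm]
    rw [← Finset.sum_add_distrib]
    congr 1; ext i; rw [← Finset.sum_add_distrib]
  rw [this]
  have : ∑ i ∈ C, ∑ j ∈ C.erase i, (f i j + f j i) = ∑ i ∈ C, ((C.card - 1 : ℕ) : ℝ) * c0 := by
    apply Finset.sum_congr rfl
    intro i hi
    rw [Finset.sum_congr rfl (fun j hj => h i hi j (Finset.mem_of_mem_erase hj)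
      (fun e => (Finset.mem_erase.mp hj).1 e.symm)),
      Finset.sum_const, Finset.card_erase_of_mem hi, nsmul_eq_mul]
  rw [this, Finset.sum_const, nsmul_eq_mul, Nat.cast_mul]
  ring

lemma T1_zero (N k : ℕ) (y : Fin N → ℝ) (hy : ∀ i j : Fin N, i ≠ j → y i ≠ y j) :
    ∑ B ∈ powersetCard k (univ : Finset (Fin N)), ∑ j ∈ B, ∑ i ∈ univ \ B,
      (∏ l ∈ B, y l) * (4 * y i / (y i - y j)) = 0 := by
  cases k with
  | zero => simp
  | succ k' =>
    have key : ∀ B ∈ powersetCard (k'+1) (univ : Finset (Fin N)), ∀ j ∈ B,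
        ∑ i ∈ univ \ B, (∏ l ∈ B, y l) * (4 * y i / (y i - y j))
        = (fun C j => ∑ i ∈ univ \ insert j C,
            (∏ l ∈ insert j C, y l) * (4 * y i / (y i - y j))) (B.erase j) j := by
      intro B hB j hj
      have hBi : B = insert j (B.erase j) := (Finset.insert_erase hj).symm
      conv_lhs => rw [hBi]
    rw [Finset.sum_congr rfl (fun B hB => Finset.sum_congr rfl (fun j hj => key B hB j hj))]
    rw [sum_erase_reindex (fun C j => ∑ i ∈ univ \ insert j C,
      (∏ l ∈ insert j C, y l) * (4 * y i / (y i - y j)))]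
    apply Finset.sum_eq_zero
    intro C hC
    have hz : ∀ j ∈ univ \ C, ∑ i ∈ univ \ insert j C,
        (∏ l ∈ insert j C, y l) * (4 * y i / (y i - y j))
        = ∑ i ∈ (univ \ C).erase j, (∏ l ∈ C, y l) * (4 * y j * y i / (y i - y j)) := by
      intro j hj
      have hjC : j ∉ C := (Finset.mem_sdiff.mp hj).2
      have h1 : univ \ insert j C = (univ \ C).erase j := by
        ext a
        simp only [Finset.mem_sdiff, Finset.mem_erase, Finset.mem_insert, Finset.mem_univ,
          true_and]
        tauto
      rw [h1, Finset.prod_insert hjC]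
      refine Finset.sum_congr rfl (fun i _ => by ring)
    rw [Finset.sum_congr rfl hz]
    have h0 := sum_pair_off (univ \ C)
      (fun j i => (∏ l ∈ C, y l) * (4 * y j * y i / (y i - y j))) 0 ?_
    · simp only [mul_zero] at h0
      linarith
    · intro a ha b hb hab
      have hne' : y a - y b ≠ 0 := sub_ne_zero.mpr (hy a b hab)
      have hne : y b - y a ≠ 0 := sub_ne_zero.mpr (hy b a hab.symm)
      field_simp
      ring

lemma key_identity (N k : ℕ) (hk : k + 1 ≤ N) (ν : ℝ) (y : Fin N → ℝ)
    (hy : ∀ i j : Fin N, i ≠ j → y i ≠ y j) :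
    ∑ A ∈ powersetCard (k+1) (univ : Finset (Fin N)), ∑ i ∈ A,
        (∏ j ∈ A.erase i, y j) *
          ((∑ j ∈ univ.erase i, 4 * y i / (y i - y j)) + 2 * ν)
    = 2 * ((N : ℝ) - k) * (((N : ℝ) - k - 1) + ν)
        * ∑ B ∈ powersetCard k (univ : Finset (Fin N)), ∏ j ∈ B, y j := by
  rw [sum_erase_reindex (fun B i => (∏ j ∈ B, y j) *
    ((∑ j ∈ univ.erase i, 4 * y i / (y i - y j)) + 2 * ν))]
  have hNk1 : 1 ≤ N - k := by omega
  have hkN : k ≤ N := by omega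
  have hcast : ((N - k : ℕ) : ℝ) = (N : ℝ) - k := by
    push_cast [Nat.cast_sub hkN]; ring
  have hcast2 : ((N - k - 1 : ℕ) : ℝ) = (N : ℝ) - k - 1 := by
    rw [Nat.sub_sub, Nat.cast_sub (by omega : k + 1 ≤ N)]
    push_cast; ring
  have step : ∀ B ∈ powersetCard k (univ : Finset (Fin N)),
      ∑ i ∈ univ \ B, (∏ j ∈ B, y j) *
          ((∑ j ∈ univ.erase i, 4 * y i / (y i - y j)) + 2 * ν)
      = (∑ j ∈ B, ∑ i ∈ univ \ B, (∏ l ∈ B, y l) * (4 * y i / (y i - y j)))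
        + 2 * ((N : ℝ) - k) * (((N : ℝ) - k - 1) + ν) * ∏ j ∈ B, y j := by
    intro B hB
    have hBcard : B.card = k := Finset.mem_powersetCard_univ.mp hB
    have hDcard : (univ \ B).card = N - k := by
      rw [Finset.card_sdiff_of_subset (Finset.subset_univ B), Finset.card_univ, Fintype.card_fin, hBcard]
    have hsplit : ∀ i ∈ univ \ B,
        ∑ j ∈ univ.erase i, 4 * y i / (y i - y j)
        = (∑ j ∈ B, 4 * y i / (y i - y j))
          + ∑ j ∈ (univ \ B).erase i, 4 * y i / (y i - y j) := by
      intro i hi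
      have hiB : i ∉ B := (Finset.mem_sdiff.mp hi).2
      have hdisj : Disjoint B ((univ \ B).erase i) := by
        rw [Finset.disjoint_left]
        intro a haB ha
        exact (Finset.mem_sdiff.mp (Finset.mem_of_mem_erase ha)).2 haB
      have hmem : ∀ a : Fin N, a ∈ B → a ≠ i := fun a h e => hiB (e ▸ h)
      have hunion : B ∪ (univ \ B).erase i = univ.erase i := by
        ext a
        simp only [Finset.mem_union, Finset.mem_erase, Finset.mem_sdiff, Finset.mem_univ,
          true_and, and_true]
        constructor
        · rintro (h | h)
          · exact hmem a h
          · exact h.1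
        · intro h
          by_cases hB' : a ∈ B
          · exact Or.inl hB'
          · exact Or.inr ⟨h, hB'⟩
      rw [← hunion, Finset.sum_union hdisj]
    rw [Finset.sum_congr rfl (fun i hi => by rw [hsplit i hi])]
    have expand : ∀ i ∈ univ \ B, (∏ j ∈ B, y j) *
        (((∑ j ∈ B, 4 * y i / (y i - y j))
          + ∑ j ∈ (univ \ B).erase i, 4 * y i / (y i - y j)) + 2 * ν)
        = (∑ j ∈ B, (∏ l ∈ B, y l) * (4 * y i / (y i - y j)))
          + ((∏ j ∈ B, y j) * (∑ j ∈ (univ \ B).erase i, 4 * y i / (y i - y j))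
            + (∏ j ∈ B, y j) * (2 * ν)) := by
      intro i hi
      rw [← Finset.mul_sum]
      ring
    rw [Finset.sum_congr rfl expand, Finset.sum_add_distrib, Finset.sum_add_distrib,
      Finset.sum_comm]
    congr 1
    have hpair : 2 * (∑ i ∈ univ \ B, ∑ j ∈ (univ \ B).erase i, 4 * y i / (y i - y j))
        = (((univ \ B).card * ((univ \ B).card - 1) : ℕ) : ℝ) * 4 := by
      apply sum_pair_off
      intro a ha b hb hab
      have hne' : y a - y b ≠ 0 := sub_ne_zero.mpr (hy a b hab)
      have hne : y b - y a ≠ 0 := sub_ne_zero.mpr (hy b a hab.symm)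
      field_simp
      ring
    rw [hDcard] at hpair
    have hinner : (∑ i ∈ univ \ B, ∑ j ∈ (univ \ B).erase i, 4 * y i / (y i - y j))
        = ((N : ℝ) - k) * ((N : ℝ) - k - 1) * 2 := by
      have hc : (((N - k) * (N - k - 1) : ℕ) : ℝ) = ((N : ℝ) - k) * ((N : ℝ) - k - 1) := by
        rw [Nat.cast_mul, hcast, hcast2]
      rw [hc] at hpair
      linarith
    rw [← Finset.mul_sum, hinner, Finset.sum_const, hDcard, nsmul_eq_mul, hcast]
    ring
  rw [Finset.sum_congr rfl step, Finset.sum_add_distrib, T1_zero N k y hy, zero_add,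
    ← Finset.mul_sum]

lemma deriv_esymm (N : ℕ) (ν : ℝ) (I : Set ℝ)
    (x : ℝ → Fin N → ℝ)
    (hcham : ∀ t ∈ I, (∀ i j : Fin N, i < j → x t j < x t i) ∧ ∀ i : Fin N, 0 < x t i)
    (hode : ∀ t ∈ I, ∀ i : Fin N, HasDerivAt (fun s => x s i)
      (∑ j ∈ Finset.univ.erase i,
          (1 / (x t i - x t j) + 1 / (x t i + x t j)) + ν / x t i) t)
    (k : ℕ) (hk : k + 1 ≤ N) (t : ℝ) (ht : t ∈ I) :
    HasDerivAt (fun s => esymm Finset.univ (k+1) (fun i => (x s i) ^ 2))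
      (2 * ((N : ℝ) - k) * (((N : ℝ) - k - 1) + ν)
        * esymm Finset.univ k (fun i => (x t i) ^ 2)) t := by
  have hpos : ∀ i : Fin N, 0 < x t i := (hcham t ht).2
  have hord : ∀ i j : Fin N, i < j → x t j < x t i := (hcham t ht).1
  have hne : ∀ i j : Fin N, i ≠ j → x t i ≠ x t j := by
    intro i j hij
    rcases lt_or_gt_of_ne hij with h | h
    · exact (hord i j h).ne'
    · exact (hord j i h).ne
  have hy : ∀ i j : Fin N, i ≠ j → (x t i) ^ 2 ≠ (x t j) ^ 2 := by
    intro i j hij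
    rcases lt_or_gt_of_ne hij with h | h
    · have := hord i j h; have := hpos j; nlinarith
    · have := hord j i h; have := hpos i; nlinarith
  -- derivative of each coordinate squared
  have hsq : ∀ i : Fin N, HasDerivAt (fun s => (x s i) ^ 2)
      ((∑ j ∈ univ.erase i, 4 * (x t i) ^ 2 / ((x t i) ^ 2 - (x t j) ^ 2)) + 2 * ν) t := by
    intro i
    have h := (hode t ht i).pow 2
    have hval : (2 : ℕ) * x t i ^ (2 - 1) *
        (∑ j ∈ Finset.univ.erase i,
          (1 / (x t i - x t j) + 1 / (x t i + x t j)) + ν / x t i)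
        = (∑ j ∈ univ.erase i, 4 * (x t i) ^ 2 / ((x t i) ^ 2 - (x t j) ^ 2)) + 2 * ν := by
      have hxi : x t i ≠ 0 := (hpos i).ne'
      rw [mul_add, Finset.mul_sum]
      congr 1
      · apply Finset.sum_congr rfl
        intro j hj
        have hji : j ≠ i := (Finset.mem_erase.mp hj).1
        have h1 : x t i - x t j ≠ 0 := sub_ne_zero.mpr (hne i j hji.symm)
        have h2 : x t i + x t j ≠ 0 := by
          have := hpos i; have := hpos j; intro h; linarith
        have h3 : (x t i) ^ 2 - (x t j) ^ 2 ≠ 0 := sub_ne_zero.mpr (hy i j hji.symm)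
        field_simp
        ring
      · field_simp
        ring
    rw [hval] at h
    exact h
  have hmain : HasDerivAt (fun s => ∑ A ∈ powersetCard (k+1) (univ : Finset (Fin N)),
      ∏ i ∈ A, (x s i) ^ 2)
      (∑ A ∈ powersetCard (k+1) (univ : Finset (Fin N)), ∑ i ∈ A,
        (∏ j ∈ A.erase i, (x t j) ^ 2) •
          ((∑ j ∈ univ.erase i, 4 * (x t i) ^ 2 / ((x t i) ^ 2 - (x t j) ^ 2)) + 2 * ν)) t := by
    apply HasDerivAt.fun_sum
    intro A hA
    exact HasDerivAt.fun_finsetProd (fun i _ => hsq i)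
  simp only [smul_eq_mul] at hmain
  rw [key_identity N k hk ν (fun i => (x t i) ^ 2) hy] at hmain
  exact hmain


open Polynomial in
theorem stmt11 (N : ℕ) (ν : ℝ) (hν : 0 < ν) (I : Set ℝ) (hI : Convex ℝ I)
    (x : ℝ → Fin N → ℝ)
    (hcham : ∀ t ∈ I, (∀ i j : Fin N, i < j → x t j < x t i) ∧ ∀ i : Fin N, 0 < x t i)
    (hode : ∀ t ∈ I, ∀ i : Fin N, HasDerivAt (fun s => x s i)
      (∑ j ∈ Finset.univ.erase i,
          (1 / (x t i - x t j) + 1 / (x t i + x t j)) + ν / x t i) t) :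
    ∀ k : ℕ, k ≤ N → ∃ p : Polynomial ℝ,
      p.natDegree ≤ k ∧
      (∀ t ∈ I, esymm Finset.univ k (fun i => (x t i) ^ 2) = p.eval t) ∧
      p.coeff k = 2 ^ k * (∏ m ∈ Finset.range k, ((N : ℝ) + ν - (m + 1)))
        * (N.choose k : ℝ) := by
  intro k
  induction k with
  | zero =>
    intro _
    refine ⟨1, by simp, ?_, by simp⟩
    intro t ht
    simp [esymm]
  | succ k ih =>
    intro hkN
    have hk : k ≤ N := by omega
    obtain ⟨p, hdeg, heval, hcoeff⟩ := ih (by omega)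
    set c : ℝ := 2 * ((N : ℝ) - k) * (((N : ℝ) - k - 1) + ν) with hc
    rcases Set.eq_empty_or_nonempty I with hIe | ⟨t0, ht0⟩
    · refine ⟨Polynomial.monomial (k+1) (2 ^ (k+1)
        * (∏ m ∈ Finset.range (k+1), ((N : ℝ) + ν - (m + 1))) * (N.choose (k+1) : ℝ)),
        Polynomial.natDegree_monomial_le _, ?_, by simp [Polynomial.coeff_monomial]⟩
      intro t ht
      rw [hIe] at ht
      exact absurd ht (Set.notMem_empty t)
    · set q : Polynomial ℝ := ∑ n ∈ Finset.range (p.natDegree + 1),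
        Polynomial.C (c * p.coeff n / (n + 1)) * Polynomial.X ^ (n + 1) with hq
      have hqder : q.derivative = Polynomial.C c * p := by
        rw [hq, map_sum]
        have hterm : ∀ n ∈ Finset.range (p.natDegree + 1),
            Polynomial.derivative (Polynomial.C (c * p.coeff n / (n + 1))
              * Polynomial.X ^ (n + 1)) = Polynomial.C (c * p.coeff n) * Polynomial.X ^ n := by
          intro n _
          rw [Polynomial.derivative_C_mul_X_pow]
          have hne : ((n : ℝ) + 1) ≠ 0 := by positivity
          congr 1
          congr 1
          push_cast
          field_simp
        rw [Finset.sum_congr rfl hterm]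
        conv_rhs => rw [Polynomial.as_sum_range' p (p.natDegree + 1) (Nat.lt_succ_self _)]
        rw [Finset.mul_sum]
        refine Finset.sum_congr rfl (fun n _ => ?_)
        rw [← Polynomial.C_mul_X_pow_eq_monomial, ← mul_assoc, ← Polynomial.C_mul]
      set P : Polynomial ℝ := q + Polynomial.C
        (esymm Finset.univ (k+1) (fun i => (x t0 i) ^ 2) - q.eval t0) with hP
      have hPder : P.derivative = Polynomial.C c * p := by
        rw [hP, Polynomial.derivative_add, Polynomial.derivative_C, add_zero, hqder]
      refine ⟨P, ?_, ?_, ?_⟩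
      · refine le_trans (Polynomial.natDegree_add_le _ _) (max_le ?_ (by simp))
        apply Polynomial.natDegree_sum_le_of_forall_le
        intro n hn
        have hn' : n ≤ p.natDegree := Nat.lt_succ_iff.mp (Finset.mem_range.mp hn)
        rw [Polynomial.C_mul_X_pow_eq_monomial]
        exact le_trans (Polynomial.natDegree_monomial_le _) (by omega)
      · intro t ht
        have hgderiv : ∀ s ∈ I, HasDerivWithinAt
            (fun u => esymm Finset.univ (k+1) (fun i => (x u i) ^ 2) - P.eval u)
            ((fun _ : ℝ => (0:ℝ)) s) I s := by
          intro s hs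
          have h1 := deriv_esymm N ν I x hcham hode k hkN s hs
          have h2 : HasDerivAt (fun u => P.eval u) ((Polynomial.C c * p).eval s) s := by
            have h0 := P.hasDerivAt s
            rwa [hPder] at h0
          have h3 := h1.sub h2
          have h4 : c * esymm Finset.univ k (fun i => (x s i) ^ 2)
              - (Polynomial.C c * p).eval s = 0 := by
            rw [heval s hs, Polynomial.eval_mul, Polynomial.eval_C]
            ring
          rw [hc] at h4
          rw [h4] at h3
          exact h3.hasDerivWithinAt
        have hb := Convex.norm_image_sub_le_of_norm_hasDerivWithin_le (C := 0) hgderiv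
          (fun s _ => by simp) hI ht0 ht
        rw [zero_mul] at hb
        have hzero := norm_le_zero_iff.mp hb
        have hgt0 : esymm Finset.univ (k+1) (fun i => (x t0 i) ^ 2) - P.eval t0 = 0 := by
          rw [hP, Polynomial.eval_add, Polynomial.eval_C]
          ring
        rw [hgt0, sub_zero, sub_eq_zero] at hzero
        exact hzero
      · rw [hP, Polynomial.coeff_add, Polynomial.coeff_C, if_neg (Nat.succ_ne_zero k),
          add_zero, hq, Polynomial.finset_sum_coeff]
        have hterm : ∀ n ∈ Finset.range (p.natDegree + 1),
            (Polynomial.C (c * p.coeff n / (n + 1)) * Polynomial.X ^ (n + 1)).coeff (k+1)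
            = if n = k then c * p.coeff n / (n + 1) else 0 := by
          intro n _
          rw [Polynomial.coeff_C_mul, Polynomial.coeff_X_pow]
          by_cases h : n = k
          · subst h; simp
          · rw [if_neg (by omega), if_neg h, mul_zero]
        rw [Finset.sum_congr rfl hterm, Finset.sum_ite_eq']
        have hch : ((N.choose (k+1) : ℝ)) * ((k : ℝ) + 1)
            = (N.choose k : ℝ) * ((N : ℝ) - (k : ℝ)) := by
          have h0 := Nat.choose_succ_right_eq N k
          have h1 : ((N.choose (k+1) * (k+1) : ℕ) : ℝ) = ((N.choose k * (N - k) : ℕ) : ℝ) := by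
            exact_mod_cast congrArg (Nat.cast : ℕ → ℝ) h0
          push_cast [Nat.cast_sub hk] at h1
          linarith
        have hgoal : c * p.coeff k / ((k : ℝ) + 1)
            = 2 ^ (k+1) * (∏ m ∈ Finset.range (k+1), ((N : ℝ) + ν - (m + 1)))
              * (N.choose (k+1) : ℝ) := by
          rw [hcoeff, Finset.prod_range_succ, hc,
            div_eq_iff (show ((k : ℝ) + 1) ≠ 0 by positivity)]
          linear_combination (-(2 ^ (k+1) * (∏ m ∈ Finset.range k, ((N : ℝ) + ν - (m + 1)))
            * ((N : ℝ) + ν - ((k : ℝ) + 1)))) * hch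
        by_cases hcase : k ∈ Finset.range (p.natDegree + 1)
        · rw [if_pos hcase]
          exact hgoal
        · rw [if_neg hcase]
          have hz : p.coeff k = 0 := Polynomial.coeff_eq_zero_of_natDegree_lt
            (by simp only [Finset.mem_range] at hcase; omega)
          rw [← hgoal, hz, mul_zero, zero_div]
end
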